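/- Let A be a super-commutative super-ring. The intersection of all prime super-ideals of A equals the set of nilpotent elements of A, and contains the super-ideal I_A = A·A₁. -/

import Mathlib

open DirectSum

section SuperAux
set_option linter.unusedSectionVars false

variable {R : Type*} [Ring R] (𝒜 : ZMod 2 → AddSubgroup R) [GradedRing 𝒜]

private lemma aux_decomp (r : R) :
    r = (DirectSum.decompose 𝒜 r 0 : R) + (DirectSum.decompose 𝒜 r 1 : R) := by
  classical
  conv_lhs => rw [← DirectSum.sum_support_decompose 𝒜 r]
  rw [Finset.sum_subset (Finset.subset_univ ((DirectSum.decompose 𝒜 r).support))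
    (fun i _ hi => by
      simp only [DFinsupp.mem_support_iff, not_not] at hi
      rw [hi]; rfl)]
  exact Fin.sum_univ_two _

variable (hsq : ∀ s : R, s ∈ 𝒜 1 → s * s = 0)
variable (hc0 : ∀ r s : R, r ∈ 𝒜 0 → r * s = s * r)

include hsq in
private lemma aux_anticomm {s t : R} (hs : s ∈ 𝒜 1) (ht : t ∈ 𝒜 1) : s * t = -(t * s) := by
  have h := hsq (s + t) (add_mem hs ht)
  rw [add_mul, mul_add, mul_add, hsq s hs, hsq t ht, zero_add, add_zero] at h
  exact eq_neg_of_add_eq_zero_left h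

include hsq hc0 in
private lemma aux_push {s : R} (hs : s ∈ 𝒜 1) (r : R) :
    s * r = ((DirectSum.decompose 𝒜 r 0 : R) - (DirectSum.decompose 𝒜 r 1 : R)) * s := by
  have h0 := hc0 (DirectSum.decompose 𝒜 r 0 : R) s (SetLike.coe_mem _)
  have h1 := aux_anticomm 𝒜 hsq hs (SetLike.coe_mem (DirectSum.decompose 𝒜 r 1))
  nth_rewrite 1 [aux_decomp 𝒜 r]
  rw [mul_add, sub_mul, h1, ← h0, sub_eq_add_neg]

include hsq hc0 in
private lemma aux_sandwich {s : R} (hs : s ∈ 𝒜 1) (r : R) : s * r * s = 0 := by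
  rw [aux_push 𝒜 hsq hc0 hs r, mul_assoc, hsq s hs, mul_zero]

include hsq hc0 in
private lemma aux_oddlist (L : List R) (hL : ∀ x ∈ L, x ∈ 𝒜 1) (hnd : ¬ L.Nodup) :
    L.prod = 0 := by
  induction L with
  | nil => exact absurd List.nodup_nil hnd
  | cons a L ih =>
    rw [List.nodup_cons] at hnd
    push_neg at hnd
    by_cases ha : a ∈ L
    · obtain ⟨u, v, rfl⟩ := List.append_of_mem ha
      rw [List.prod_cons, List.prod_append, List.prod_cons, ← mul_assoc, ← mul_assoc,
        aux_sandwich 𝒜 hsq hc0 (hL a List.mem_cons_self) u.prod]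
      simp
    · rw [List.prod_cons, ih (fun x hx => hL x (List.mem_cons_of_mem a hx)) (hnd ha), mul_zero]

include hsq hc0 in
private lemma aux_pushlist (Q : List (R × R)) (hQ : ∀ p ∈ Q, p.2 ∈ 𝒜 1) :
    ∃ w : R, (Q.map fun p => p.1 * p.2).prod = w * (Q.map Prod.snd).prod := by
  induction Q with
  | nil => exact ⟨1, by simp⟩
  | cons p Q ih =>
    obtain ⟨w, hw⟩ := ih (fun q hq => hQ q (List.mem_cons_of_mem p hq))
    refine ⟨p.1 * ((DirectSum.decompose 𝒜 w 0 : R) - (DirectSum.decompose 𝒜 w 1 : R)), ?_⟩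
    rw [List.map_cons, List.prod_cons, hw, List.map_cons, List.prod_cons,
      ← mul_assoc, mul_assoc p.1, aux_push 𝒜 hsq hc0 (hQ p List.mem_cons_self) w,
      ← mul_assoc, ← mul_assoc, mul_assoc _ p.2]

private lemma aux_expand (T : Finset R) (f : R → R) (k : ℕ) :
    (∑ s ∈ T, f s * s) ^ k
      = ∑ g : Fin k → {x // x ∈ T}, (List.ofFn fun i => f ((g i) : R) * ((g i) : R)).prod := by
  induction k with
  | zero => simp
  | succ k ih =>
    rw [pow_succ', ih, Finset.mul_sum]
    rw [← Finset.sum_coe_sort T (fun s => f s * s)]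
    simp_rw [Finset.sum_mul]
    rw [Finset.sum_comm, ← Fintype.sum_prod_type']
    refine Fintype.sum_equiv (Fin.consEquiv (fun _ => ({x // x ∈ T} : Type _))) _ _ fun p => ?_
    rw [List.ofFn_succ, List.prod_cons]
    simp [Fin.consEquiv, mul_assoc]

include hsq hc0 in
private lemma aux_nil (y : R) (hy : y ∈ Ideal.span {x : R | x ∈ 𝒜 1}) : IsNilpotent y := by
  classical
  obtain ⟨T, hT, hyT⟩ := Submodule.mem_span_finite_of_mem_span hy
  obtain ⟨f, -, hf⟩ := Submodule.mem_span_finset.mp hyT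
  refine ⟨T.card + 1, ?_⟩
  simp_rw [smul_eq_mul] at hf
  rw [← hf, aux_expand T f (T.card + 1)]
  apply Finset.sum_eq_zero
  intro g _
  have hcard : Fintype.card {x // x ∈ T} < Fintype.card (Fin (T.card + 1)) := by
    simp [Fintype.card_coe]
  obtain ⟨i, j, hne, hg⟩ := Fintype.exists_ne_map_eq_of_card_lt g hcard
  have hodd : ∀ i : Fin (T.card + 1), ((g i : R)) ∈ 𝒜 1 := fun i => hT (g i).2
  obtain ⟨w, hw⟩ := aux_pushlist 𝒜 hsq hc0
    (List.ofFn fun i => (f ((g i) : R), ((g i) : R)))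
    (by
      intro p hp
      rw [List.mem_ofFn] at hp
      obtain ⟨i, rfl⟩ := hp
      exact hodd i)
  have hmap1 : ((List.ofFn fun i => (f ((g i) : R), ((g i) : R))).map fun p => p.1 * p.2)
      = List.ofFn fun i => f ((g i) : R) * ((g i) : R) := by
    rw [List.map_ofFn]; rfl
  have hmap2 : ((List.ofFn fun i => (f ((g i) : R), ((g i) : R))).map Prod.snd)
      = List.ofFn fun i => ((g i) : R) := by
    rw [List.map_ofFn]; rfl
  rw [hmap1, hmap2] at hw
  rw [hw, aux_oddlist 𝒜 hsq hc0 _ (fun x hx => by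
      rw [List.mem_ofFn] at hx
      obtain ⟨i, rfl⟩ := hx
      exact hodd i)
    (fun hnd => hne (List.nodup_ofFn.mp hnd (by simp only [Function.comp_apply, hg])))]
  rw [mul_zero]

include hsq hc0 in
private lemma aux_comm (a b : R) : a * b - b * a ∈ Ideal.span {x : R | x ∈ 𝒜 1} := by
  have hA1 : (DirectSum.decompose 𝒜 a 1 : R) ∈ Ideal.span {x : R | x ∈ 𝒜 1} :=
    Ideal.subset_span (Set.mem_setOf_eq.mpr (SetLike.coe_mem _))
  have key : a * b - b * a
      = (((DirectSum.decompose 𝒜 b 0 : R) - (DirectSum.decompose 𝒜 b 1 : R)) - b)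
        * (DirectSum.decompose 𝒜 a 1 : R) := by
    have h0 : (DirectSum.decompose 𝒜 a 0 : R) * b = b * (DirectSum.decompose 𝒜 a 0 : R) :=
      hc0 _ _ (SetLike.coe_mem _)
    have h1 : (DirectSum.decompose 𝒜 a 1 : R) * b
        = b * (DirectSum.decompose 𝒜 a 1 : R)
          + (((DirectSum.decompose 𝒜 b 0 : R) - (DirectSum.decompose 𝒜 b 1 : R)) - b)
            * (DirectSum.decompose 𝒜 a 1 : R) := by
      have hp : (DirectSum.decompose 𝒜 a 1 : R) * b
          = ((DirectSum.decompose 𝒜 b 0 : R) - (DirectSum.decompose 𝒜 b 1 : R))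
            * (DirectSum.decompose 𝒜 a 1 : R) := by
        exact aux_push 𝒜 hsq hc0 (SetLike.coe_mem _) b
      rw [hp]; noncomm_ring
    nth_rewrite 1 [aux_decomp 𝒜 a]
    nth_rewrite 3 [aux_decomp 𝒜 a]
    rw [add_mul, mul_add, h0, h1]
    noncomm_ring
  rw [key]
  exact Ideal.mul_mem_left _ _ hA1

include hsq hc0 in
private lemma aux_main {x : R} (hnx : ¬ IsNilpotent x) :
    ∃ p : Ideal R, p.IsHomogeneous 𝒜 ∧
      (p ≠ ⊤ ∧ (∀ a b : R, a * b - b * a ∈ p) ∧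
        (∀ a b : R, a * b ∈ p → a ∈ p ∨ b ∈ p)) ∧ x ∉ p := by
  classical
  set I : Ideal R := Ideal.span {x : R | x ∈ 𝒜 1} with hI
  set S : Set (Ideal R) := {p | I ≤ p ∧ ∀ n : ℕ, x ^ n ∉ p} with hS
  have hIS : I ∈ S := by
    refine ⟨le_refl _, fun n hn => hnx ?_⟩
    obtain ⟨k, hk⟩ := aux_nil 𝒜 hsq hc0 (x ^ n) hn
    exact ⟨n * k, by rw [pow_mul]; exact hk⟩
  obtain ⟨p, hIp, hmax⟩ := zorn_le_nonempty₀ S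
    (fun c hcS hchain y hy => by
      refine ⟨sSup c, ⟨le_trans (hcS hy).1 (le_sSup hy), fun n hn => ?_⟩,
        fun z hz => le_sSup hz⟩
      obtain ⟨q, hq, hnq⟩ :=
        (Submodule.mem_sSup_of_directed ⟨y, hy⟩ hchain.directedOn).mp hn
      exact (hcS hq).2 n hnq) I hIS
  have hIle : I ≤ p := hmax.prop.1
  have hxp : ∀ n : ℕ, x ^ n ∉ p := hmax.prop.2
  have hcomm_p : ∀ a b : R, a * b - b * a ∈ p := fun a b => hIle (aux_comm 𝒜 hsq hc0 a b)
  have habs : ∀ u ∈ p, ∀ v : R, u * v ∈ p := by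
    intro u hu v
    have h1 : v * u ∈ p := Ideal.mul_mem_left _ _ hu
    have h2 := p.add_mem (hcomm_p u v) h1
    simpa using h2
  have hne_top : p ≠ ⊤ := fun h => hxp 0 (h ▸ Submodule.mem_top)
  have h1mem : ∀ r : R, (DirectSum.decompose 𝒜 r 1 : R) ∈ p := fun r =>
    hIle (Ideal.subset_span (Set.mem_setOf_eq.mpr (SetLike.coe_mem _)))
  have homog : p.IsHomogeneous 𝒜 := by
    intro i r hr
    have hcase : ∀ j : ZMod 2, j = 0 ∨ j = 1 := by decide
    rcases hcase i with h | h <;> subst h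
    · have h0 : (DirectSum.decompose 𝒜 r 0 : R) = r - (DirectSum.decompose 𝒜 r 1 : R) :=
        eq_sub_of_add_eq (aux_decomp 𝒜 r).symm
      rw [h0]
      exact p.sub_mem hr (h1mem r)
    · exact h1mem r
  have hprime : ∀ a b : R, a * b ∈ p → a ∈ p ∨ b ∈ p := by
    intro a b hab
    by_contra hcon
    push_neg at hcon
    obtain ⟨ha, hb⟩ := hcon
    have key : ∀ c : R, c ∉ p → ∃ n : ℕ, ∃ q ∈ p, ∃ r : R, q + r * c = x ^ n := by
      intro c hc
      have hcmem : c ∈ p ⊔ Ideal.span {c} :=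
        Ideal.mem_sup_right (Ideal.subset_span rfl)
      have hlt : p < p ⊔ Ideal.span {c} :=
        lt_of_le_of_ne le_sup_left (fun h => hc (h ▸ hcmem))
      have hnotS : p ⊔ Ideal.span {c} ∉ S := fun hmem =>
        (lt_iff_le_not_ge.mp hlt).2 (hmax.2 hmem hlt.le)
      rw [hS, Set.mem_setOf_eq] at hnotS
      push_neg at hnotS
      obtain ⟨n, hn⟩ := hnotS (le_trans hIle le_sup_left)
      obtain ⟨q, hq, z, hz, hqz⟩ := Submodule.mem_sup.mp hn
      obtain ⟨r, hr⟩ := Submodule.mem_span_singleton.mp hz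
      exact ⟨n, q, hq, r, by rw [← smul_eq_mul, hr, hqz]⟩
    obtain ⟨n, qa, hqa, ra, hra⟩ := key a ha
    obtain ⟨m, qb, hqb, rb, hrb⟩ := key b hb
    apply hxp (n + m)
    rw [pow_add, ← hra, ← hrb]
    have e : (qa + ra * a) * (qb + rb * b)
        = qa * (qb + rb * b) + (ra * a) * qb + (ra * rb) * (a * b)
          + (ra * (a * rb - rb * a)) * b := by noncomm_ring
    rw [e]
    refine p.add_mem (p.add_mem (p.add_mem ?_ ?_) ?_) ?_
    · exact habs qa hqa _
    · exact Ideal.mul_mem_left _ _ hqb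
    · exact Ideal.mul_mem_left _ _ hab
    · exact habs _ (Ideal.mul_mem_left _ _ (hcomm_p a rb)) b
  exact ⟨p, homog, ⟨hne_top, hcomm_p, hprime⟩,
    fun hxm => hxp 1 (by rwa [pow_one])⟩

end SuperAux

/-- In a super-commutative super-ring `A`, the intersection of
all prime super-ideals equals the set of nilpotent elements, and it contains the
super-ideal `I_A = A·A₁`. -/
theorem inter_prime_superIdeals_eq_nilpotents
    {R : Type*} [Ring R]
    (𝒜 : ZMod 2 → AddSubgroup R) [GradedRing 𝒜]
    (hc0 : ∀ r s : R, r ∈ 𝒜 0 → r * s = s * r)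
    (hsq : ∀ s : R, s ∈ 𝒜 1 → s * s = 0) :
    {x : R | ∀ p : Ideal R, p.IsHomogeneous 𝒜 →
        (p ≠ ⊤ ∧ (∀ a b : R, a * b - b * a ∈ p) ∧
          (∀ a b : R, a * b ∈ p → a ∈ p ∨ b ∈ p)) → x ∈ p} =
      {x : R | IsNilpotent x} ∧
    ∀ x ∈ Ideal.span {x : R | x ∈ 𝒜 1},
      ∀ p : Ideal R, p.IsHomogeneous 𝒜 →
        (p ≠ ⊤ ∧ (∀ a b : R, a * b - b * a ∈ p) ∧
          (∀ a b : R, a * b ∈ p → a ∈ p ∨ b ∈ p)) → x ∈ p := by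
  constructor
  · ext x
    simp only [Set.mem_setOf_eq]
    constructor
    · intro hx
      by_contra hnx
      obtain ⟨p, h1, h2, h3⟩ := aux_main 𝒜 hsq hc0 hnx
      exact h3 (hx p h1 h2)
    · rintro ⟨n, hn⟩ p hp ⟨hne, hcomm, hprime⟩
      have hpow : ∀ k : ℕ, x ^ k ∈ p → x ∈ p := by
        intro k
        induction k with
        | zero =>
          intro h
          exact absurd ((Ideal.eq_top_iff_one p).mpr (by simpa using h)) hne
        | succ k ih =>
          intro h
          rw [pow_succ] at h
          rcases hprime _ _ h with h' | h'
          · exact ih h'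
          · exact h'
      exact hpow n (hn ▸ p.zero_mem)
  · intro y hy p hp ⟨hne, hcomm, hprime⟩
    refine Ideal.span_le.mpr ?_ hy
    intro s hs
    rcases hprime s s (by rw [hsq s hs]; exact p.zero_mem) with h | h <;> exact h
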